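/- For density matrices ρ, σ on an n-dimensional Hilbert space and t ∈ (0,1), the eigenvalue sequence of ρ ⋆_t σ = t·ρ + (1−t)·σ + i·√(t(1−t))·[ρ,σ] is majorized by the sequence (t·λ_j(ρ) + (1−t)·λ_j(σ))_j; that is, for every k, Σ_{j=1}^k λ_j(ρ ⋆_t σ) ≤ Σ_{j=1}^k (t·λ_j(ρ) + (1−t)·λ_j(σ)). -/

import Mathlib

open Matrix ComplexOrder Finset

/-- Eigenvalues of a Hermitian matrix listed in non-increasing order:
`eigDesc hA j` is the `j`-th largest eigenvalue of `A`. -/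
noncomputable def eigDesc {n : ℕ} {A : Matrix (Fin n) (Fin n) ℂ} (hA : A.IsHermitian) :
    Fin n → ℝ :=
  fun j => hA.eigenvalues (Tuple.sort hA.eigenvalues (Fin.rev j))

/-- The partial-swap convolution `A ⋆_t B = tA + (1-t)B + i√(t(1-t))[A,B]`. -/
noncomputable def pswap {n : ℕ} (t : ℝ) (A B : Matrix (Fin n) (Fin n) ℂ) :
    Matrix (Fin n) (Fin n) ℂ :=
  (t : ℂ) • A + ((1 - t : ℝ) : ℂ) • B
    + (Complex.I * (Real.sqrt (t * (1 - t)) : ℂ)) • (A * B - B * A)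



variable {n : ℕ}

/-- dot product of star x with H x is fixed by conj for Hermitian H -/
lemma herm_dot_conj {H : Matrix (Fin n) (Fin n) ℂ} (hH : H.IsHermitian) (x : Fin n → ℂ) :
    (starRingEnd ℂ) (star x ⬝ᵥ H *ᵥ x) = star x ⬝ᵥ H *ᵥ x := by
  have h1 : star (star x) ⬝ᵥ star (H *ᵥ x) = star ((H *ᵥ x) ⬝ᵥ star x) := star_dotProduct_star _ _
  rw [star_star] at h1
  rw [starRingEnd_apply]
  calc star (star x ⬝ᵥ H *ᵥ x) = star ((H *ᵥ x) ⬝ᵥ star x) := by rw [dotProduct_comm]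
  _ = x ⬝ᵥ star (H *ᵥ x) := by rw [← h1]
  _ = star x ⬝ᵥ H *ᵥ x := by
      rw [star_mulVec, hH.eq, dotProduct_comm, ← dotProduct_mulVec]

lemma herm_dot_im {H : Matrix (Fin n) (Fin n) ℂ} (hH : H.IsHermitian) (x : Fin n → ℂ) :
    (star x ⬝ᵥ H *ᵥ x).im = 0 := by
  have := herm_dot_conj hH x
  rw [Complex.conj_eq_iff_im] at this; exact this

lemma psd_dot_re {H : Matrix (Fin n) (Fin n) ℂ} (hH : H.PosSemidef) (x : Fin n → ℂ) :
    0 ≤ (star x ⬝ᵥ H *ᵥ x).re := hH.re_dotProduct_nonneg x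

/-- trace of conjugate-transpose-symmetric product of Hermitians is real -/
lemma herm_mul_trace_im {A B : Matrix (Fin n) (Fin n) ℂ} (hA : A.IsHermitian)
    (hB : B.IsHermitian) : ((A * B).trace).im = 0 := by
  have h : (starRingEnd ℂ) ((A * B).trace) = (A * B).trace := by
    have h1 : ((A * B)ᴴ).trace = star ((A * B).trace) := trace_conjTranspose _
    rw [conjTranspose_mul, hA.eq, hB.eq, trace_mul_comm] at h1
    rw [starRingEnd_apply]
    exact h1.symm
  rwa [Complex.conj_eq_iff_im] at h

lemma psd_trace_re_nonneg {A : Matrix (Fin n) (Fin n) ℂ} (hA : A.PosSemidef) :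
    0 ≤ A.trace.re := by
  rw [Matrix.trace, Complex.re_sum]
  refine Finset.sum_nonneg fun i _ => ?_
  have := hA.re_dotProduct_nonneg (Pi.single i 1)
  simpa [Matrix.diag, dotProduct, Pi.single_apply, mulVec, Finset.sum_ite_eq'] using this

open scoped MatrixOrder in
noncomputable def Matrix.PosSemidef.sqrt {A : Matrix (Fin n) (Fin n) ℂ} (_hA : A.PosSemidef) :
    Matrix (Fin n) (Fin n) ℂ := CFC.sqrt A

open scoped MatrixOrder in
lemma Matrix.PosSemidef.sqrt_mul_self {A : Matrix (Fin n) (Fin n) ℂ} (hA : A.PosSemidef) :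
    hA.sqrt * hA.sqrt = A := CFC.sqrt_mul_sqrt_self A hA.nonneg

open scoped MatrixOrder in
lemma Matrix.PosSemidef.posSemidef_sqrt {A : Matrix (Fin n) (Fin n) ℂ} (hA : A.PosSemidef) :
    hA.sqrt.PosSemidef := (CFC.sqrt_nonneg A).posSemidef

lemma psd_mul_trace_re_nonneg {A B : Matrix (Fin n) (Fin n) ℂ} (hA : A.PosSemidef)
    (hB : B.PosSemidef) : 0 ≤ ((A * B).trace).re := by
  classical
  have hs := hA.sqrt_mul_self
  have hherm : hA.sqrt.IsHermitian := hA.posSemidef_sqrt.isHermitian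
  have h1 : (A * B).trace = (hA.sqrtᴴ * B * hA.sqrt).trace := by
    conv_lhs => rw [← hs]
    rw [Matrix.mul_assoc, trace_mul_comm, hherm.eq]
  rw [h1]
  exact psd_trace_re_nonneg (hB.conjTranspose_mul_mul_same hA.sqrt)
open Matrix ComplexOrder Finset

variable {n : ℕ}

lemma sum_abs_cs {ι : Type*} [Fintype ι] (a b : ι → ℂ) :
    ‖∑ i, (starRingEnd ℂ) (a i) * b i‖ ≤
      Real.sqrt (∑ i, Complex.normSq (a i)) * Real.sqrt (∑ i, Complex.normSq (b i)) := by
  have h1 : ‖∑ i, (starRingEnd ℂ) (a i) * b i‖ ≤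
      ∑ i, ‖a i‖ * ‖b i‖ := by
    refine le_trans (norm_sum_le _ _) (le_of_eq ?_)
    refine Finset.sum_congr rfl fun i _ => ?_
    rw [norm_mul, Complex.norm_conj]
  have h2 : (∑ i, ‖a i‖ * ‖b i‖) ^ 2 ≤
      (∑ i, ‖a i‖ ^ 2) * (∑ i, ‖b i‖ ^ 2) :=
    Finset.sum_mul_sq_le_sq_mul_sq _ _ _
  have h3 : (∑ i, ‖a i‖ * ‖b i‖) ≤
      Real.sqrt (∑ i, Complex.normSq (a i)) * Real.sqrt (∑ i, Complex.normSq (b i)) := by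
    have hnn : 0 ≤ ∑ i, ‖a i‖ * ‖b i‖ :=
      Finset.sum_nonneg fun i _ => mul_nonneg (norm_nonneg _) (norm_nonneg _)
    have := Real.sqrt_le_sqrt (by simpa [Complex.sq_norm] using h2)
    rw [Real.sqrt_sq hnn] at this
    refine this.trans (le_of_eq ?_)
    rw [← Real.sqrt_mul (Finset.sum_nonneg fun i _ => Complex.normSq_nonneg _)]
  exact h1.trans h3

lemma trace_conjTranspose_mul_eq (X Y : Matrix (Fin n) (Fin n) ℂ) :
    (Xᴴ * Y).trace = ∑ p : Fin n × Fin n, (starRingEnd ℂ) (X p.2 p.1) * Y p.2 p.1 := by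
  rw [Matrix.trace, Fintype.sum_prod_type]
  simp only [Matrix.diag, Matrix.mul_apply, conjTranspose_apply, Complex.star_def]

lemma trace_conjTranspose_mul_self_re (X : Matrix (Fin n) (Fin n) ℂ) :
    ((Xᴴ * X).trace).re = ∑ p : Fin n × Fin n, Complex.normSq (X p.2 p.1) := by
  rw [trace_conjTranspose_mul_eq, Complex.re_sum]
  refine Finset.sum_congr rfl fun p _ => ?_
  rw [← Complex.normSq_eq_conj_mul_self, Complex.ofReal_re]

lemma trace_cs (X Y : Matrix (Fin n) (Fin n) ℂ) :
    ‖(Xᴴ * Y).trace‖ ≤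
      Real.sqrt (((Xᴴ * X).trace).re) * Real.sqrt (((Yᴴ * Y).trace).re) := by
  rw [trace_conjTranspose_mul_eq, trace_conjTranspose_mul_self_re,
    trace_conjTranspose_mul_self_re]
  exact sum_abs_cs _ _
open Matrix ComplexOrder Finset

variable {n : ℕ}

lemma card_filter_lt (n k : ℕ) :
    ((univ.filter fun j : Fin n => (j : ℕ) < k).card) = min k n := by
  classical
  have h : (univ.filter fun j : Fin n => (j : ℕ) < k).map Fin.valEmbedding
      = Finset.range (min k n) := by
    ext m
    simp only [Finset.mem_map, Finset.mem_filter, Finset.mem_univ, true_and,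
      Fin.valEmbedding_apply, Finset.mem_range, lt_min_iff]
    constructor
    · rintro ⟨j, hj, rfl⟩; exact ⟨hj, j.isLt⟩
    · rintro ⟨h1, h2⟩; exact ⟨⟨m, h2⟩, h1, rfl⟩
  have := congrArg Finset.card h
  rwa [Finset.card_map, Finset.card_range] at this

lemma mem_filter_lt_iff {k : ℕ} (j : Fin n) :
    ((j : ℕ) < k) ↔ ((j : ℕ) < min k n) := by
  constructor
  · intro h; exact lt_min h j.isLt
  · intro h; exact lt_of_lt_of_le h (min_le_left _ _)

lemma sum_weight_le {k : ℕ} (d c : Fin n → ℝ) (hd : ∀ i, 0 ≤ d i)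
    (hc0 : ∀ i, 0 ≤ c i) (hc1 : ∀ i, c i ≤ 1) (π : Equiv.Perm (Fin n))
    (hmono : Antitone (fun j => d (π j)))
    (hsum : ∑ i, c i = ((univ.filter fun j : Fin n => (j : ℕ) < k).card : ℝ)) :
    ∑ i, c i * d i ≤ ∑ j ∈ univ.filter (fun j : Fin n => (j : ℕ) < k), d (π j) := by
  classical
  set F := univ.filter (fun j : Fin n => (j : ℕ) < k) with hF
  set k' := F.card with hk'
  have hkmin : k' = min k n := card_filter_lt n k
  have hk'n : k' ≤ n := hkmin ▸ min_le_right _ _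
  rcases Nat.eq_zero_or_pos k' with h0 | hpos
  · have hFe : F = ∅ := Finset.card_eq_zero.mp h0
    have hc : ∀ i ∈ univ, c i = 0 := by
      intro i _
      have : ∑ i, c i = 0 := by rw [hsum, h0]; simp
      exact (Finset.sum_eq_zero_iff_of_nonneg (fun i _ => hc0 i)).mp this i (mem_univ i)
    rw [hFe]
    simp only [Finset.sum_empty]
    refine le_of_eq (Finset.sum_eq_zero fun i _ => ?_)
    rw [hc i (mem_univ i), zero_mul]
  · have hj0lt : k' - 1 < n := lt_of_lt_of_le (Nat.sub_lt hpos one_pos) hk'n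
    set j₀ : Fin n := ⟨k' - 1, hj0lt⟩ with hj₀
    set s := d (π j₀) with hs
    have hs0 : 0 ≤ s := hd _
    have hmemF : ∀ j : Fin n, j ∈ F ↔ (j : ℕ) < k' := by
      intro j
      rw [hF, Finset.mem_filter]
      simp only [mem_univ, true_and]
      rw [hkmin]; exact mem_filter_lt_iff j
    have step1 : ∑ i, c i * d i ≤ s * k' + ∑ i, max (d i - s) 0 := by
      have : ∀ i, c i * d i ≤ s * c i + max (d i - s) 0 := by
        intro i
        rcases le_or_gt (d i) s with h | h
        · have h1 : c i * d i ≤ c i * s := mul_le_mul_of_nonneg_left h (hc0 i)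
          have h2 : (0:ℝ) ≤ max (d i - s) 0 := le_max_right _ _
          nlinarith
        · have h1 : c i * (d i - s) ≤ 1 * (d i - s) :=
            mul_le_mul_of_nonneg_right (hc1 i) (by linarith)
          have h2 : max (d i - s) 0 = d i - s := max_eq_left (by linarith)
          nlinarith
      calc ∑ i, c i * d i ≤ ∑ i, (s * c i + max (d i - s) 0) :=
            Finset.sum_le_sum fun i _ => this i
        _ = s * (∑ i, c i) + ∑ i, max (d i - s) 0 := by
            rw [Finset.sum_add_distrib, Finset.mul_sum]
        _ = s * k' + ∑ i, max (d i - s) 0 := by rw [hsum]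
    have step2 : ∑ i, max (d i - s) 0 = ∑ i, max (d (π i) - s) 0 :=
      (Equiv.sum_comp π (fun x => max (d x - s) 0)).symm
    have step3 : ∑ i, max (d (π i) - s) 0 = ∑ j ∈ F, (d (π j) - s) := by
      rw [← Finset.sum_filter_add_sum_filter_not univ (fun j : Fin n => (j : ℕ) < k)
        (fun i => max (d (π i) - s) 0), ← hF]
      have hA : ∑ j ∈ F, max (d (π j) - s) 0 = ∑ j ∈ F, (d (π j) - s) := by
        refine Finset.sum_congr rfl fun j hj => ?_
        have hjk : (j : ℕ) < k' := (hmemF j).mp hj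
        have hle : j ≤ j₀ := by
          rw [Fin.le_def]; simp only [hj₀]; omega
        have : s ≤ d (π j) := hmono hle
        exact max_eq_left (by linarith)
      have hB : ∑ j ∈ univ.filter (fun j : Fin n => ¬ (j : ℕ) < k),
          max (d (π j) - s) 0 = 0 := by
        refine Finset.sum_eq_zero fun j hj => ?_
        rw [Finset.mem_filter] at hj
        have hjk : ¬ (j : ℕ) < k := hj.2
        have hjk' : k' ≤ (j : ℕ) := by
          have := hkmin; omega
        have hge : j₀ ≤ j := by
          rw [Fin.le_def]; simp only [hj₀]; omega
        have : d (π j) ≤ s := hmono hge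
        exact max_eq_right (by linarith)
      rw [hA, hB, add_zero]
    rw [step2, step3] at step1
    have : s * k' + ∑ j ∈ F, (d (π j) - s) = ∑ j ∈ F, d (π j) := by
      rw [Finset.sum_sub_distrib, Finset.sum_const, ← hk']
      simp only [nsmul_eq_mul]
      ring
    rw [this] at step1
    exact step1


variable {n : ℕ}

/-- the permutation realizing the descending rearrangement -/
noncomputable def descPerm (d : Fin n → ℝ) : Equiv.Perm (Fin n) :=
  Fin.revPerm.trans (Tuple.sort d)

lemma descPerm_apply (d : Fin n → ℝ) (j : Fin n) :
    descPerm d j = Tuple.sort d j.rev := rfl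

lemma eigDesc_eq_descPerm {A : Matrix (Fin n) (Fin n) ℂ} (hA : A.IsHermitian) (j : Fin n) :
    eigDesc hA j = hA.eigenvalues (descPerm hA.eigenvalues j) := rfl

lemma antitone_comp_descPerm (d : Fin n → ℝ) :
    Antitone (fun j => d (descPerm d j)) := by
  intro a b hab
  have h1 : b.rev ≤ a.rev := Fin.rev_le_rev.mpr hab
  exact Tuple.monotone_sort d h1

/-- Easy direction of Ky Fan: any sub-unital PSD weight gives at most top-k sum. -/
lemma kyfan {k : ℕ} {ρ P : Matrix (Fin n) (Fin n) ℂ} (hρ : ρ.PosSemidef)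
    (hP : P.PosSemidef) (hP1 : (1 - P).PosSemidef)
    (htr : P.trace = ((univ.filter fun j : Fin n => (j : ℕ) < k).card : ℂ)) :
    ((P * ρ).trace).re ≤
      ∑ j ∈ univ.filter (fun j : Fin n => (j : ℕ) < k), eigDesc hρ.isHermitian j := by
  classical
  set hAH := hρ.isHermitian with hAHdef
  set V : Matrix (Fin n) (Fin n) ℂ := (hAH.eigenvectorUnitary : Matrix (Fin n) (Fin n) ℂ)
    with hV
  have hVV : V * star V = 1 := (Matrix.mem_unitaryGroup_iff).mp hAH.eigenvectorUnitary.2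
  have hVV' : star V * V = 1 := (Matrix.mem_unitaryGroup_iff').mp hAH.eigenvectorUnitary.2
  set D : Matrix (Fin n) (Fin n) ℂ :=
    Matrix.diagonal (RCLike.ofReal ∘ hAH.eigenvalues) with hD
  have hspec : ρ = V * D * star V := hAH.spectral_theorem
  set P₂ : Matrix (Fin n) (Fin n) ℂ := star V * P * V with hP₂
  have hP₂psd : P₂.PosSemidef := by
    rw [hP₂]
    have := hP.conjTranspose_mul_mul_same V
    rwa [← Matrix.star_eq_conjTranspose] at this
  have hP₂1psd : (1 - P₂).PosSemidef := by
    have h9 : Vᴴ * (1 - P) * V = 1 - P₂ := by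
      rw [Matrix.mul_sub, Matrix.sub_mul, Matrix.mul_one, hP₂,
        ← Matrix.star_eq_conjTranspose, hVV']
    rw [← h9]
    exact hP1.conjTranspose_mul_mul_same V
  -- trace identities
  have htrP₂ : P₂.trace = P.trace := by
    rw [hP₂, Matrix.trace_mul_cycle, hVV, Matrix.one_mul]
  have hPρ : (P * ρ).trace = (P₂ * D).trace := by
    rw [hspec, hP₂]
    rw [show P * (V * D * star V) = (P * V) * D * star V by noncomm_ring]
    rw [Matrix.trace_mul_cycle]
    rw [show star V * (P * V) * D = (star V * P * V) * D by noncomm_ring]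
  set c : Fin n → ℝ := fun i => (P₂ i i).re with hc
  have hdiagre : ∀ i, (P₂ * D) i i = P₂ i i * ((hAH.eigenvalues i : ℝ) : ℂ) := by
    intro i
    rw [hD, Matrix.mul_diagonal]
    rfl
  have htrace_sum : ((P₂ * D).trace).re = ∑ i, c i * hAH.eigenvalues i := by
    rw [Matrix.trace, Complex.re_sum]
    refine Finset.sum_congr rfl fun i _ => ?_
    rw [Matrix.diag, hdiagre i]
    rw [Complex.mul_re, Complex.ofReal_re, Complex.ofReal_im]
    simp [hc]
  -- c properties
  have hc0 : ∀ i, 0 ≤ c i := by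
    intro i
    have := hP₂psd.re_dotProduct_nonneg (Pi.single i 1)
    simpa [dotProduct, Pi.single_apply, mulVec, Finset.sum_ite_eq', hc] using this
  have hc1 : ∀ i, c i ≤ 1 := by
    intro i
    have := hP₂1psd.re_dotProduct_nonneg (Pi.single i 1)
    have h2 : ((1 - P₂) i i).re = 1 - c i := by
      simp [Matrix.sub_apply, Matrix.one_apply, hc]
    have h3 : 0 ≤ ((1 - P₂) i i).re := by
      simpa [dotProduct, Pi.single_apply, mulVec, Finset.sum_ite_eq'] using this
    linarith [h2 ▸ h3]
  have hcsum : ∑ i, c i = ((univ.filter fun j : Fin n => (j : ℕ) < k).card : ℝ) := by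
    have h1 : P₂.trace = ((univ.filter fun j : Fin n => (j : ℕ) < k).card : ℂ) := by
      rw [htrP₂, htr]
    have h2 : (P₂.trace).re = ∑ i, c i := by
      rw [Matrix.trace, Complex.re_sum]; rfl
    rw [← h2, h1]
    simp
  have hd0 : ∀ i, 0 ≤ hAH.eigenvalues i := hρ.eigenvalues_nonneg
  have := sum_weight_le hAH.eigenvalues c hd0 hc0 hc1 (descPerm hAH.eigenvalues)
    (antitone_comp_descPerm _) hcsum
  rw [hPρ, htrace_sum]
  refine this.trans (le_of_eq ?_)
  exact Finset.sum_congr rfl fun j _ => rfl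
variable {n : ℕ}

lemma dot_star_eq {ι : Type*} [Fintype ι] (a b : ι → ℂ) :
    star a ⬝ᵥ b = ∑ i, (starRingEnd ℂ) (a i) * b i := by
  simp [dotProduct, Complex.star_def]

lemma dot_self_re {ι : Type*} [Fintype ι] (a : ι → ℂ) :
    (star a ⬝ᵥ a).re = ∑ i, Complex.normSq (a i) := by
  rw [dot_star_eq, Complex.re_sum]
  exact Finset.sum_congr rfl fun i _ => by
    rw [← Complex.normSq_eq_conj_mul_self, Complex.ofReal_re]

lemma dot_self_re_nonneg {ι : Type*} [Fintype ι] (a : ι → ℂ) : 0 ≤ (star a ⬝ᵥ a).re := by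
  rw [dot_self_re]; exact Finset.sum_nonneg fun i _ => Complex.normSq_nonneg _

/-- square of ρ is dominated by ρ when 0 ≤ ρ ≤ 1 -/
lemma rho_sub_sq_psd {ρ : Matrix (Fin n) (Fin n) ℂ} (hρ : ρ.PosSemidef)
    (hρ1 : ((1 : Matrix (Fin n) (Fin n) ℂ) - ρ).PosSemidef) : (ρ - ρ * ρ).PosSemidef := by
  obtain ⟨s, hsH, hss⟩ : ∃ s : Matrix (Fin n) (Fin n) ℂ, sᴴ = s ∧ s * s = ρ :=
    ⟨hρ.sqrt, hρ.posSemidef_sqrt.isHermitian.eq, hρ.sqrt_mul_self⟩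
  have h := hρ1.conjTranspose_mul_mul_same s
  have heq : sᴴ * (1 - ρ) * s = ρ - ρ * ρ := by
    rw [hsH, Matrix.mul_sub, Matrix.mul_one, Matrix.sub_mul, hss]
    congr 1
    calc s * ρ * s = s * (s * s) * s := by rw [hss]
      _ = (s * s) * (s * s) := by noncomm_ring
      _ = ρ * ρ := by rw [hss]
  rwa [heq] at h

lemma one_sub_comp_psd {ρ P : Matrix (Fin n) (Fin n) ℂ} (hρ : ρ.PosSemidef)
    (hρ1 : ((1 : Matrix (Fin n) (Fin n) ℂ) - ρ).PosSemidef) (hP : P.PosSemidef)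
    (hPP : P * P = P) :
    (((1 : Matrix (Fin n) (Fin n) ℂ) - P * (ρ * P))
      - ((1 - P) * (ρ * P))ᴴ * ((1 - P) * (ρ * P))).PosSemidef := by
  classical
  set Q : Matrix (Fin n) (Fin n) ℂ := 1 - P with hQ
  set X : Matrix (Fin n) (Fin n) ℂ := Q * (ρ * P) with hX
  set A : Matrix (Fin n) (Fin n) ℂ := P * (ρ * P) with hA
  set M : Matrix (Fin n) (Fin n) ℂ := Xᴴ * X with hM
  have hPH : Pᴴ = P := hP.isHermitian.eq
  have hρH : ρᴴ = ρ := hρ.isHermitian.eq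
  have hPQ : P * Q = 0 := by rw [hQ, Matrix.mul_sub, Matrix.mul_one, hPP, sub_self]
  have hApsd : A.PosSemidef := by
    have := hρ.conjTranspose_mul_mul_same P
    rwa [hPH, Matrix.mul_assoc] at this
  have hMpsd : M.PosSemidef := posSemidef_conjTranspose_mul_self X
  have hQpsd : Q.PosSemidef := by
    have hQH : Qᴴ = Q := by rw [hQ, conjTranspose_sub, conjTranspose_one, hPH]
    have hQQ : Qᴴ * Q = Q := by
      rw [hQH, hQ, Matrix.sub_mul, Matrix.one_mul, Matrix.mul_sub, Matrix.mul_one, hPP]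
      abel
    rw [← hQQ]; exact posSemidef_conjTranspose_mul_self Q
  have hHerm : (((1 : Matrix (Fin n) (Fin n) ℂ) - A) - M).IsHermitian :=
    (Matrix.isHermitian_one.sub hApsd.isHermitian).sub hMpsd.isHermitian
  refine Matrix.PosSemidef.of_dotProduct_mulVec_nonneg hHerm ?_
  intro x
  rw [Complex.le_def]
  refine ⟨?_, (herm_dot_im hHerm x).symm⟩
  rw [Complex.zero_re]
  -- setup vectors
  set u : Fin n → ℂ := P *ᵥ x with hu
  set y : Fin n → ℂ := ρ *ᵥ u with hy
  have hstaru : star u = star x ᵥ* P := by rw [hu, star_mulVec, hPH]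
  have hPu : P *ᵥ u = u := by rw [hu, mulVec_mulVec, hPP]
  have hstary : star y = star u ᵥ* ρ := by rw [hy, star_mulVec, hρH]
  -- dot products
  have hdotA : star x ⬝ᵥ A *ᵥ x = star u ⬝ᵥ y := by
    rw [hA, ← mulVec_mulVec, dotProduct_mulVec, ← hstaru, hy, hu, mulVec_mulVec]
  have hXx : X *ᵥ x = Q *ᵥ y := by
    rw [hX, ← mulVec_mulVec, ← mulVec_mulVec]
  have hdotM : star x ⬝ᵥ M *ᵥ x = star (Q *ᵥ y) ⬝ᵥ (Q *ᵥ y) := by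
    rw [hM, ← mulVec_mulVec, dotProduct_mulVec, ← star_mulVec, hXx]
  -- real quantities
  set W : ℝ := (star x ⬝ᵥ x).re with hW
  set w : ℝ := (star u ⬝ᵥ u).re with hw
  set m : ℝ := (star u ⬝ᵥ y).re with hm
  set ny : ℝ := (star y ⬝ᵥ y).re with hny
  set p : ℝ := (star (P *ᵥ y) ⬝ᵥ (P *ᵥ y)).re with hp
  set q : ℝ := (star (Q *ᵥ y) ⬝ᵥ (Q *ᵥ y)).re with hq
  have hW0 : 0 ≤ W := dot_self_re_nonneg x
  have hw0 : 0 ≤ w := dot_self_re_nonneg u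
  have hp0 : 0 ≤ p := dot_self_re_nonneg _
  have hq0 : 0 ≤ q := dot_self_re_nonneg _
  have hny0 : 0 ≤ ny := dot_self_re_nonneg _
  have hm0 : 0 ≤ m := hρ.re_dotProduct_nonneg u
  -- goal reduction
  have hgoal : (star x ⬝ᵥ (((1 : Matrix (Fin n) (Fin n) ℂ) - A) - M) *ᵥ x).re
      = W - m - q := by
    rw [Matrix.sub_mulVec, Matrix.sub_mulVec, Matrix.one_mulVec, dotProduct_sub,
      dotProduct_sub, hdotA, hdotM]
    simp [hW, hm, hq]
  rw [hgoal]
  -- fact: ny ≤ m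
  have f1 : ny ≤ m := by
    have h : 0 ≤ (star u ⬝ᵥ (ρ - ρ * ρ) *ᵥ u).re :=
      (rho_sub_sq_psd hρ hρ1).re_dotProduct_nonneg u
    have he : star u ⬝ᵥ (ρ - ρ * ρ) *ᵥ u = (star u ⬝ᵥ y) - (star y ⬝ᵥ y) := by
      rw [Matrix.sub_mulVec, dotProduct_sub, ← mulVec_mulVec, ← hy, hstary,
        ← dotProduct_mulVec]
    rw [he, Complex.sub_re] at h
    rw [hm, hny]; linarith
  -- fact: m ≤ w
  have f2 : m ≤ w := by
    have h : 0 ≤ (star u ⬝ᵥ ((1 : Matrix (Fin n) (Fin n) ℂ) - ρ) *ᵥ u).re :=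
      hρ1.re_dotProduct_nonneg u
    have he : star u ⬝ᵥ ((1 : Matrix (Fin n) (Fin n) ℂ) - ρ) *ᵥ u
        = (star u ⬝ᵥ u) - (star u ⬝ᵥ y) := by
      rw [Matrix.sub_mulVec, dotProduct_sub, Matrix.one_mulVec, hy]
    rw [he, Complex.sub_re] at h
    rw [hm, hw]; linarith
  -- fact: w ≤ W
  have f3 : w ≤ W := by
    have h : 0 ≤ (star x ⬝ᵥ Q *ᵥ x).re := hQpsd.re_dotProduct_nonneg x
    have he : star x ⬝ᵥ Q *ᵥ x = (star x ⬝ᵥ x) - (star u ⬝ᵥ u) := by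
      have h1 : star u ⬝ᵥ u = star x ⬝ᵥ P *ᵥ x := by
        rw [hstaru, ← dotProduct_mulVec, hPu]
      rw [hQ, Matrix.sub_mulVec, dotProduct_sub, Matrix.one_mulVec, h1]
    rw [he, Complex.sub_re] at h
    rw [hw, hW]; linarith
  -- fact: ny = p + q
  have f4 : ny = p + q := by
    have hyd : (P *ᵥ y) + (Q *ᵥ y) = y := by
      rw [← Matrix.add_mulVec, hQ]
      have h99 : P + ((1 : Matrix (Fin n) (Fin n) ℂ) - P) = 1 := by abel
      rw [h99, Matrix.one_mulVec]
    have hcross : star (P *ᵥ y) ⬝ᵥ (Q *ᵥ y) = 0 := by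
      rw [star_mulVec, hPH, ← dotProduct_mulVec, mulVec_mulVec, hPQ]
      simp
    have hcross2 : star (Q *ᵥ y) ⬝ᵥ (P *ᵥ y) = 0 := by
      have hQH : Qᴴ = Q := hQpsd.isHermitian.eq
      have hQP : Q * P = 0 := by
        rw [hQ, Matrix.sub_mul, Matrix.one_mul, hPP, sub_self]
      rw [star_mulVec, hQH, ← dotProduct_mulVec, mulVec_mulVec, hQP]
      simp
    have : star y ⬝ᵥ y = (star (P *ᵥ y) ⬝ᵥ (P *ᵥ y)) + (star (Q *ᵥ y) ⬝ᵥ (Q *ᵥ y)) := by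
      conv_lhs => rw [← hyd]
      rw [star_add, add_dotProduct, dotProduct_add, dotProduct_add, hcross, hcross2]
      ring
    rw [hny, this, Complex.add_re, hp, hq]
  -- fact: m^2 ≤ w * p  (Cauchy-Schwarz)
  have f5 : m ^ 2 ≤ w * p := by
    have huy : star u ⬝ᵥ y = star u ⬝ᵥ (P *ᵥ y) := by
      conv_lhs => rw [← hPu]
      rw [star_mulVec, hPH, ← dotProduct_mulVec]
    have habs : ‖star u ⬝ᵥ (P *ᵥ y)‖ ≤ Real.sqrt w * Real.sqrt p := by
      rw [dot_star_eq]
      have := sum_abs_cs u (P *ᵥ y)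
      rwa [← dot_self_re, ← dot_self_re, ← hw, ← hp] at this
    have hm_le : m ≤ ‖star u ⬝ᵥ (P *ᵥ y)‖ := by
      rw [hm, huy]; exact Complex.re_le_norm _
    have h2 : m ≤ Real.sqrt w * Real.sqrt p := le_trans hm_le habs
    have h3 : m ^ 2 ≤ (Real.sqrt w * Real.sqrt p) ^ 2 := by
      exact pow_le_pow_left₀ hm0 h2 2
    calc m ^ 2 ≤ (Real.sqrt w * Real.sqrt p) ^ 2 := h3
      _ = w * p := by
        rw [mul_pow, Real.sq_sqrt hw0, Real.sq_sqrt hp0]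
  -- conclude
  rcases le_or_gt w 0 with hcase | hcase
  · have hww : w = 0 := le_antisymm hcase hw0
    have hmz : m = 0 := by linarith
    have hqz : q ≤ 0 := by linarith
    linarith
  · have h6 : 0 ≤ w - 2 * m + p := by
      rcases le_or_gt 0 (w - 2 * m + p) with h | h
      · exact h
      · exfalso; nlinarith [sq_nonneg (w - m)]
    linarith
variable {n : ℕ}

lemma lemA {k : ℕ} {ρ P : Matrix (Fin n) (Fin n) ℂ} (hρ : ρ.PosSemidef)
    (hρ1 : ((1 : Matrix (Fin n) (Fin n) ℂ) - ρ).PosSemidef)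
    (hP : P.PosSemidef) (hPP : P * P = P)
    (htr : P.trace = ((univ.filter fun j : Fin n => (j : ℕ) < k).card : ℂ)) :
    ((P * ρ).trace).re + ((((1 - P) * (ρ * P))ᴴ * ((1 - P) * (ρ * P))).trace).re ≤
      ∑ j ∈ univ.filter (fun j : Fin n => (j : ℕ) < k), eigDesc hρ.isHermitian j := by
  classical
  set Q : Matrix (Fin n) (Fin n) ℂ := 1 - P with hQdef
  set X : Matrix (Fin n) (Fin n) ℂ := Q * (ρ * P) with hXdef
  set A : Matrix (Fin n) (Fin n) ℂ := P * (ρ * P) with hAdef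
  set M : Matrix (Fin n) (Fin n) ℂ := Xᴴ * X with hMdef
  have hPH : Pᴴ = P := hP.isHermitian.eq
  have hρH : ρᴴ = ρ := hρ.isHermitian.eq
  have hQH : Qᴴ = Q := by rw [hQdef, conjTranspose_sub, conjTranspose_one, hPH]
  have hPQ : P * Q = 0 := by rw [hQdef, Matrix.mul_sub, Matrix.mul_one, hPP, sub_self]
  have hQP : Q * P = 0 := by rw [hQdef, Matrix.sub_mul, Matrix.one_mul, hPP, sub_self]
  have hQQ : Q * Q = Q := by
    rw [hQdef, Matrix.sub_mul, Matrix.one_mul, Matrix.mul_sub, Matrix.mul_one, hPP]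
    abel
  have hXH : Xᴴ = P * ρ * Q := by
    rw [hXdef, conjTranspose_mul, conjTranspose_mul, hPH, hρH, hQH, Matrix.mul_assoc]
  have hMpsd : M.PosSemidef := posSemidef_conjTranspose_mul_self X
  have hApsd : A.PosSemidef := by
    have := hρ.conjTranspose_mul_mul_same P
    rwa [hPH, Matrix.mul_assoc] at this
  have hXQ : X * Q = 0 := by
    rw [hXdef, Matrix.mul_assoc, Matrix.mul_assoc, hPQ, Matrix.mul_zero, Matrix.mul_zero]
  have hMQ : M * Q = 0 := by rw [hMdef, Matrix.mul_assoc, hXQ, Matrix.mul_zero]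
  have hQXH : Q * Xᴴ = 0 := by
    have h := congrArg conjTranspose hXQ
    rwa [conjTranspose_mul, hQH, conjTranspose_zero] at h
  have hQM : Q * M = 0 := by rw [hMdef, ← Matrix.mul_assoc, hQXH, Matrix.zero_mul]
  have hPDef : (1 + M).PosDef := Matrix.PosDef.add_posSemidef Matrix.PosDef.one hMpsd
  have hdet : IsUnit (1 + M).det := (Matrix.isUnit_iff_isUnit_det _).mp hPDef.isUnit
  set L : Matrix (Fin n) (Fin n) ℂ := (1 + M)⁻¹ with hLdef
  have hLinv : L * (1 + M) = 1 := Matrix.nonsing_inv_mul _ hdet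
  have hRinv : (1 + M) * L = 1 := Matrix.mul_nonsing_inv _ hdet
  have hLpsd : L.PosSemidef := hPDef.inv.posSemidef
  have hLH : Lᴴ = L := hLpsd.isHermitian.eq
  have hLQ : L * Q = Q := by
    have h1 : (1 + M) * Q = Q := by rw [Matrix.add_mul, Matrix.one_mul, hMQ, add_zero]
    calc L * Q = L * ((1 + M) * Q) := by rw [h1]
      _ = (L * (1 + M)) * Q := by rw [Matrix.mul_assoc]
      _ = Q := by rw [hLinv, Matrix.one_mul]
  have hQL : Q * L = Q := by
    have h1 : Q * (1 + M) = Q := by rw [Matrix.mul_add, Matrix.mul_one, hQM, add_zero]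
    calc Q * L = (Q * (1 + M)) * L := by rw [h1]
      _ = Q * ((1 + M) * L) := by rw [Matrix.mul_assoc]
      _ = Q := by rw [hRinv, Matrix.mul_one]
  set T : Matrix (Fin n) (Fin n) ℂ := P + X with hTdef
  have hTH : Tᴴ = P + Xᴴ := by rw [hTdef, conjTranspose_add, hPH]
  have hTQ : T * Q = 0 := by rw [hTdef, Matrix.add_mul, hPQ, hXQ, add_zero]
  have hPX0 : P * X = 0 := by rw [hXdef, ← Matrix.mul_assoc, hPQ, Matrix.zero_mul]
  have hXHP0 : Xᴴ * P = 0 := by rw [hXH, Matrix.mul_assoc, hQP, Matrix.mul_zero]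
  have hTT : Tᴴ * T = P + M := by
    rw [hTH, hTdef, Matrix.add_mul, Matrix.mul_add, Matrix.mul_add, hPP, hPX0, hXHP0, ← hMdef]
    simp only [add_zero, zero_add]
  have hPM : P + M = (1 + M) - Q := by rw [hQdef]; abel
  set P' : Matrix (Fin n) (Fin n) ℂ := T * L * Tᴴ with hP'def
  have hP'psd : P'.PosSemidef := hLpsd.mul_mul_conjTranspose_same T
  have hLPM : L * (P + M) = 1 - Q := by rw [hPM, Matrix.mul_sub, hLinv, hLQ]
  have hP'P' : P' * P' = P' := by
    calc P' * P' = T * ((L * (Tᴴ * T)) * (L * Tᴴ)) := by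
          rw [hP'def]; simp only [Matrix.mul_assoc]
      _ = T * ((L * (P + M)) * (L * Tᴴ)) := by rw [hTT]
      _ = T * (L * Tᴴ) - T * (Q * (L * Tᴴ)) := by
          rw [hLPM, Matrix.sub_mul, Matrix.one_mul, Matrix.mul_sub]
      _ = P' := by
          rw [← Matrix.mul_assoc T Q, hTQ, Matrix.zero_mul, sub_zero, hP'def,
            Matrix.mul_assoc]
  have h1mP' : ((1 : Matrix (Fin n) (Fin n) ℂ) - P').PosSemidef := by
    have hH : ((1 : Matrix (Fin n) (Fin n) ℂ) - P')ᴴ = 1 - P' := by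
      rw [conjTranspose_sub, conjTranspose_one, hP'psd.isHermitian.eq]
    have hidem : ((1 : Matrix (Fin n) (Fin n) ℂ) - P') * (1 - P') = 1 - P' := by
      rw [Matrix.sub_mul, Matrix.one_mul, Matrix.mul_sub, Matrix.mul_one, hP'P']
      abel
    have h := posSemidef_conjTranspose_mul_self ((1 : Matrix (Fin n) (Fin n) ℂ) - P')
    rwa [hH, hidem] at h
  have htrP' : P'.trace = P.trace := by
    calc P'.trace = (Tᴴ * (T * L)).trace := by rw [hP'def, trace_mul_comm]
      _ = ((P + M) * L).trace := by rw [← Matrix.mul_assoc, hTT]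
      _ = (((1 + M) - Q) * L).trace := by rw [hPM]
      _ = ((1 + M) * L).trace - (Q * L).trace := by rw [Matrix.sub_mul, trace_sub]
      _ = (1 : Matrix (Fin n) (Fin n) ℂ).trace - Q.trace := by rw [hRinv, hQL]
      _ = P.trace := by rw [hQdef, trace_sub]; ring
  -- the R matrix
  set R : Matrix (Fin n) (Fin n) ℂ := Xᴴ * ρ * X with hRdef
  have hRpsd : R.PosSemidef := hρ.conjTranspose_mul_mul_same X
  have c1 : P * (ρ * X) = M := by
    rw [hXdef, hMdef, hXH, hXdef]
    simp only [Matrix.mul_assoc]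
    rw [← Matrix.mul_assoc Q Q, hQQ]
  have c2 : Xᴴ * (ρ * P) = M := by
    rw [hMdef, hXH, hXdef]
    simp only [Matrix.mul_assoc]
    rw [← Matrix.mul_assoc Q Q, hQQ]
  have c3 : Xᴴ * (ρ * X) = R := by rw [hRdef, Matrix.mul_assoc]
  have hTrhoT : Tᴴ * (ρ * T) = A + M + M + R := by
    rw [hTH, hTdef, Matrix.mul_add ρ, Matrix.mul_add, Matrix.add_mul, Matrix.add_mul,
      c1, c2, c3, ← hAdef]
    abel
  have inner : A + M + M + R = (1 + M) * (A + M) + (R + M * ((1 - A) - M)) := by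
    noncomm_ring
  have hKey : L * (A + M + M + R) = (A + M) + (L * R + (L * M) * ((1 - A) - M)) := by
    calc L * (A + M + M + R)
        = L * ((1 + M) * (A + M)) + (L * R + L * (M * ((1 - A) - M))) := by
          rw [inner, Matrix.mul_add L ((1 + M) * (A + M)) (R + M * ((1 - A) - M)),
            Matrix.mul_add L R (M * ((1 - A) - M))]
      _ = (A + M) + (L * R + (L * M) * ((1 - A) - M)) := by
          rw [← Matrix.mul_assoc L (1 + M) (A + M), hLinv, Matrix.one_mul,
            ← Matrix.mul_assoc L M ((1 - A) - M)]
  have htr2 : (P' * ρ).trace = (L * (A + M + M + R)).trace := by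
    calc (P' * ρ).trace = ((T * L) * (Tᴴ * ρ)).trace := by
          rw [hP'def]; simp only [Matrix.mul_assoc]
      _ = ((Tᴴ * ρ) * (T * L)).trace := trace_mul_comm _ _
      _ = ((Tᴴ * (ρ * T)) * L).trace := by simp only [Matrix.mul_assoc]
      _ = (L * (Tᴴ * (ρ * T))).trace := trace_mul_comm _ _
      _ = (L * (A + M + M + R)).trace := by rw [hTrhoT]
  have hAtr : A.trace = (P * ρ).trace := by
    rw [hAdef, trace_mul_comm, Matrix.mul_assoc, hPP, trace_mul_comm]
  -- PSD of L*M
  have hLMpsd : (L * M).PosSemidef := by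
    have e1 : M * L + M * (M * L) = M * ((1 + M) * L) := by
      rw [Matrix.add_mul, Matrix.one_mul, Matrix.mul_add]
    have hsum : L * (M * L) + L * (M * (M * L)) = L * M := by
      rw [← Matrix.mul_add, e1, hRinv, Matrix.mul_one]
    have p1 : (L * (M * L)).PosSemidef := by
      have h := hMpsd.conjTranspose_mul_mul_same L
      rwa [hLH, Matrix.mul_assoc] at h
    have p2 : (L * (M * (M * L))).PosSemidef := by
      have h := posSemidef_self_mul_conjTranspose (L * M)
      have e2 : (L * M) * (L * M)ᴴ = L * (M * (M * L)) := by
        rw [conjTranspose_mul, hLH, hMpsd.isHermitian.eq]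
        simp only [Matrix.mul_assoc]
      rwa [e2] at h
    have := p1.add p2
    rwa [hsum] at this
  have hcomp : (((1 : Matrix (Fin n) (Fin n) ℂ) - A) - M).PosSemidef :=
    one_sub_comp_psd hρ hρ1 hP hPP
  have hky := kyfan (k := k) hρ hP'psd h1mP' (htrP'.trans htr)
  have n1 : 0 ≤ ((L * R).trace).re := psd_mul_trace_re_nonneg hLpsd hRpsd
  have n2 : 0 ≤ (((L * M) * ((1 - A) - M)).trace).re :=
    psd_mul_trace_re_nonneg hLMpsd hcomp
  have hlow : ((P * ρ).trace).re + (M.trace).re ≤ ((P' * ρ).trace).re := by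
    rw [htr2, hKey, trace_add, trace_add, trace_add, Complex.add_re, Complex.add_re,
      Complex.add_re, hAtr]
    linarith
  exact le_trans (by linarith) hky
variable {n : ℕ}

lemma trace_spectral_sum {A : Matrix (Fin n) (Fin n) ℂ} (hA : A.IsHermitian) :
    A.trace = ∑ i, ((hA.eigenvalues i : ℝ) : ℂ) := by
  conv_lhs => rw [hA.spectral_theorem]
  rw [Unitary.conjStarAlgAut_apply]
  rw [Matrix.trace_mul_cycle,
    (Matrix.mem_unitaryGroup_iff').mp hA.eigenvectorUnitary.2, Matrix.one_mul]
  rw [Matrix.trace_diagonal]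
  rfl

lemma eig_le_one {ρ : Matrix (Fin n) (Fin n) ℂ} (hρ : ρ.PosSemidef) (h1 : ρ.trace = 1)
    (i : Fin n) : hρ.isHermitian.eigenvalues i ≤ 1 := by
  have hsum : ∑ j, hρ.isHermitian.eigenvalues j = 1 := by
    have := trace_spectral_sum hρ.isHermitian
    rw [h1] at this
    have h2 : ((1 : ℝ) : ℂ) = (((∑ j, hρ.isHermitian.eigenvalues j : ℝ)) : ℂ) := by
      rw [Complex.ofReal_sum]; exact_mod_cast this
    exact_mod_cast h2.symm
  calc hρ.isHermitian.eigenvalues i ≤ ∑ j, hρ.isHermitian.eigenvalues j :=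
        Finset.single_le_sum (fun j _ => hρ.eigenvalues_nonneg j) (mem_univ i)
    _ = 1 := hsum

lemma one_sub_psd {ρ : Matrix (Fin n) (Fin n) ℂ} (hρ : ρ.PosSemidef) (h1 : ρ.trace = 1) :
    ((1 : Matrix (Fin n) (Fin n) ℂ) - ρ).PosSemidef := by
  obtain ⟨W, f, hdec, hW, hf1, hf0⟩ :
      ∃ (W : Matrix (Fin n) (Fin n) ℂ) (f : Fin n → ℝ),
        ρ = W * Matrix.diagonal (fun i => ((f i : ℝ) : ℂ)) * star W ∧ W * star W = 1 ∧
          (∀ i, f i ≤ 1) ∧ (∀ i, 0 ≤ f i) := by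
    refine ⟨(hρ.isHermitian.eigenvectorUnitary : Matrix (Fin n) (Fin n) ℂ),
      hρ.isHermitian.eigenvalues, ?_,
      (Matrix.mem_unitaryGroup_iff).mp hρ.isHermitian.eigenvectorUnitary.2,
      eig_le_one hρ h1, hρ.eigenvalues_nonneg⟩
    exact hρ.isHermitian.spectral_theorem
  have hdpsd : (Matrix.diagonal (fun i => ((1 - f i : ℝ) : ℂ))).PosSemidef := by
    refine Matrix.PosSemidef.diagonal ?_
    intro i
    rw [Pi.zero_apply, Complex.zero_le_real]
    linarith [hf1 i]
  have h := hdpsd.mul_mul_conjTranspose_same W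
  have hsumdiag : Matrix.diagonal (fun i => ((1 - f i : ℝ) : ℂ))
      + Matrix.diagonal (fun i => ((f i : ℝ) : ℂ)) = 1 := by
    rw [Matrix.diagonal_add, ← Matrix.diagonal_one]
    congr 1
    funext i
    push_cast
    ring
  have heq : W * Matrix.diagonal (fun i => ((1 - f i : ℝ) : ℂ)) * Wᴴ = 1 - ρ := by
    rw [← Matrix.star_eq_conjTranspose]
    have expand : W * Matrix.diagonal (fun i => ((1 - f i : ℝ) : ℂ)) * star W + ρ = 1 := by
      rw [hdec, ← Matrix.add_mul, ← Matrix.mul_add, hsumdiag, Matrix.mul_one, hW]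
    exact eq_sub_of_add_eq expand
  rwa [heq] at h


theorem stmt_9 {n : ℕ} (t : ℝ) (ht : t ∈ Set.Ioo (0 : ℝ) 1)
    (ρ σ : Matrix (Fin n) (Fin n) ℂ)
    (hρ : ρ.PosSemidef) (hσ : σ.PosSemidef)
    (hρ1 : ρ.trace = 1) (hσ1 : σ.trace = 1)
    (hC : (pswap t ρ σ).IsHermitian) :
    ∀ k : ℕ,
      ∑ j ∈ Finset.univ.filter (fun j : Fin n => (j : ℕ) < k), eigDesc hC j
        ≤ ∑ j ∈ Finset.univ.filter (fun j : Fin n => (j : ℕ) < k),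
            (t * eigDesc hρ.isHermitian j + (1 - t) * eigDesc hσ.isHermitian j) := by
  classical
  intro k
  obtain ⟨ht0, ht1⟩ := ht
  set c : ℝ := Real.sqrt (t * (1 - t)) with hcdef
  -- opaque spectral data for C = pswap t ρ σ
  obtain ⟨U, dd, hdec, hUU, hUU', heig⟩ :
      ∃ (U : Matrix (Fin n) (Fin n) ℂ) (dd : Fin n → ℝ),
        pswap t ρ σ = U * Matrix.diagonal (fun i => ((dd i : ℝ) : ℂ)) * star U ∧
          U * star U = 1 ∧ star U * U = 1 ∧
          ∀ j, eigDesc hC j = dd (descPerm dd j) := by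
    refine ⟨(hC.eigenvectorUnitary : Matrix (Fin n) (Fin n) ℂ), hC.eigenvalues,
      hC.spectral_theorem, (Matrix.mem_unitaryGroup_iff).mp hC.eigenvectorUnitary.2,
      (Matrix.mem_unitaryGroup_iff').mp hC.eigenvectorUnitary.2, fun j => rfl⟩
  set π : Equiv.Perm (Fin n) := descPerm dd with hπ
  set χ : Fin n → ℝ := fun i => if ((π.symm i : Fin n) : ℕ) < k then 1 else 0 with hχ
  have hχ01 : ∀ i, χ i = 0 ∨ χ i = 1 := by
    intro i
    by_cases h : ((π.symm i : Fin n) : ℕ) < k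
    · right; simp [hχ, h]
    · left; simp [hχ, h]
  have hχ0 : ∀ i, 0 ≤ χ i := by intro i; rcases hχ01 i with h | h <;> rw [h] <;> norm_num
  have hχle1 : ∀ i, χ i ≤ 1 := by intro i; rcases hχ01 i with h | h <;> rw [h] <;> norm_num
  set Dχ : Matrix (Fin n) (Fin n) ℂ := Matrix.diagonal (fun i => ((χ i : ℝ) : ℂ)) with hDχ
  set P : Matrix (Fin n) (Fin n) ℂ := U * Dχ * star U with hPdef
  -- P is PSD
  have hDχpsd : Dχ.PosSemidef := by
    refine Matrix.PosSemidef.diagonal ?_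
    intro i; rw [Pi.zero_apply, Complex.zero_le_real]; exact hχ0 i
  have hPpsd : P.PosSemidef := by
    have h := hDχpsd.mul_mul_conjTranspose_same U
    rwa [← Matrix.star_eq_conjTranspose] at h
  -- P idempotent
  have hPP : P * P = P := by
    have hχχ : (fun i => ((χ i : ℝ) : ℂ) * ((χ i : ℝ) : ℂ)) = fun i => ((χ i : ℝ) : ℂ) := by
      funext i; rcases hχ01 i with h | h <;> rw [h] <;> norm_num
    calc P * P = U * Dχ * ((star U * U) * (Dχ * star U)) := by
          rw [hPdef]; simp only [Matrix.mul_assoc]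
      _ = U * Dχ * (Dχ * star U) := by rw [hUU', Matrix.one_mul]
      _ = U * (Dχ * Dχ) * star U := by simp only [Matrix.mul_assoc]
      _ = P := by rw [hDχ, Matrix.diagonal_mul_diagonal, hχχ]
  -- 1 - P PSD
  have h1Ppsd : ((1 : Matrix (Fin n) (Fin n) ℂ) - P).PosSemidef := by
    have hH : ((1 : Matrix (Fin n) (Fin n) ℂ) - P)ᴴ = 1 - P := by
      rw [conjTranspose_sub, conjTranspose_one, hPpsd.isHermitian.eq]
    have hidem : ((1 : Matrix (Fin n) (Fin n) ℂ) - P) * (1 - P) = 1 - P := by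
      rw [Matrix.sub_mul, Matrix.one_mul, Matrix.mul_sub, Matrix.mul_one, hPP]; abel
    have h := posSemidef_conjTranspose_mul_self ((1 : Matrix (Fin n) (Fin n) ℂ) - P)
    rwa [hH, hidem] at h
  -- trace of P
  have hχsum : ∑ i, ((χ i : ℝ) : ℂ)
      = ((univ.filter fun j : Fin n => (j : ℕ) < k).card : ℂ) := by
    have h1 : ∀ i, ((χ i : ℝ) : ℂ) = if ((π.symm i : Fin n) : ℕ) < k then 1 else 0 := by
      intro i
      by_cases h : ((π.symm i : Fin n) : ℕ) < k <;> simp [hχ, h]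
    rw [Finset.sum_congr rfl fun i _ => h1 i]
    rw [← Equiv.sum_comp π (fun i => if ((π.symm i : Fin n) : ℕ) < k then (1 : ℂ) else 0)]
    simp only [Equiv.symm_apply_apply]
    rw [Finset.sum_boole]
  have htrP : P.trace = ((univ.filter fun j : Fin n => (j : ℕ) < k).card : ℂ) := by
    rw [hPdef, Matrix.trace_mul_cycle, hUU', Matrix.one_mul, hDχ, Matrix.trace_diagonal, hχsum]
  -- LHS sum equals re trace of P * C
  have hLHS : ∑ j ∈ univ.filter (fun j : Fin n => (j : ℕ) < k), eigDesc hC j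
      = ((P * pswap t ρ σ).trace).re := by
    have hPC : P * pswap t ρ σ
        = U * Matrix.diagonal (fun i => ((χ i : ℝ) : ℂ) * ((dd i : ℝ) : ℂ)) * star U := by
      calc P * pswap t ρ σ
          = U * Dχ * ((star U * U) * (Matrix.diagonal (fun i => ((dd i : ℝ) : ℂ)) * star U))
            := by rw [hPdef, hdec]; simp only [Matrix.mul_assoc]
        _ = U * (Dχ * Matrix.diagonal (fun i => ((dd i : ℝ) : ℂ))) * star U := by
            rw [hUU', Matrix.one_mul]; simp only [Matrix.mul_assoc]
        _ = _ := by rw [hDχ, Matrix.diagonal_mul_diagonal]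
    have htr2 : (P * pswap t ρ σ).trace = ∑ i, ((χ i : ℝ) : ℂ) * ((dd i : ℝ) : ℂ) := by
      rw [hPC, Matrix.trace_mul_cycle, hUU', Matrix.one_mul, Matrix.trace_diagonal]
    rw [htr2, Complex.re_sum]
    have h3 : ∀ i, (((χ i : ℝ) : ℂ) * ((dd i : ℝ) : ℂ)).re = χ i * dd i := by
      intro i; rw [← Complex.ofReal_mul, Complex.ofReal_re]
    rw [Finset.sum_congr rfl fun i _ => h3 i]
    rw [← Equiv.sum_comp π (fun i => χ i * dd i)]
    have h4 : ∀ j, χ (π j) * dd (π j) = if (j : ℕ) < k then dd (π j) else 0 := by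
      intro j
      by_cases h : (j : ℕ) < k <;> simp [hχ, h]
    rw [Finset.sum_congr rfl fun j _ => h4 j, ← Finset.sum_filter]
    exact Finset.sum_congr rfl fun j _ => heig j
  -- 1 - ρ and 1 - σ PSD
  have hρle1 := one_sub_psd hρ hρ1
  have hσle1 := one_sub_psd hσ hσ1
  -- apply lemA
  set X1 : Matrix (Fin n) (Fin n) ℂ := (1 - P) * (ρ * P) with hX1
  set X2 : Matrix (Fin n) (Fin n) ℂ := (1 - P) * (σ * P) with hX2
  set a : ℝ := ((X1ᴴ * X1).trace).re with ha
  set b : ℝ := ((X2ᴴ * X2).trace).re with hb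
  have hA1 : ((P * ρ).trace).re + a ≤
      ∑ j ∈ univ.filter (fun j : Fin n => (j : ℕ) < k), eigDesc hρ.isHermitian j :=
    lemA hρ hρle1 hPpsd hPP htrP
  have hA2 : ((P * σ).trace).re + b ≤
      ∑ j ∈ univ.filter (fun j : Fin n => (j : ℕ) < k), eigDesc hσ.isHermitian j :=
    lemA hσ hσle1 hPpsd hPP htrP
  have ha0 : 0 ≤ a := psd_trace_re_nonneg (posSemidef_conjTranspose_mul_self X1)
  have hb0 : 0 ≤ b := psd_trace_re_nonneg (posSemidef_conjTranspose_mul_self X2)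
  -- expansion of the trace of P * pswap
  set w : ℂ := (P * (ρ * σ)).trace with hw
  have hexpand : ((P * pswap t ρ σ).trace).re
      = t * ((P * ρ).trace).re + (1 - t) * ((P * σ).trace).re
        + (Complex.I * (c : ℂ) * ((P * (ρ * σ)).trace - (P * (σ * ρ)).trace)).re := by
    have h1 : P * pswap t ρ σ
        = (t : ℂ) • (P * ρ) + ((1 - t : ℝ) : ℂ) • (P * σ)
          + (Complex.I * (c : ℂ)) • (P * (ρ * σ) - P * (σ * ρ)) := by
      have hps : pswap t ρ σ = (t : ℂ) • ρ + ((1 - t : ℝ) : ℂ) • σ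
          + (Complex.I * (c : ℂ)) • (ρ * σ - σ * ρ) := rfl
      rw [hps]
      rw [Matrix.mul_add, Matrix.mul_add, Matrix.mul_smul, Matrix.mul_smul, Matrix.mul_smul,
        Matrix.mul_sub]
    rw [h1, trace_add, trace_add, trace_smul, trace_smul, trace_smul, trace_sub,
      Complex.add_re, Complex.add_re]
    rw [smul_eq_mul, smul_eq_mul, smul_eq_mul, Complex.re_ofReal_mul, Complex.re_ofReal_mul]
  -- conjugation relation
  have hconj : (P * (σ * ρ)).trace = (starRingEnd ℂ) w := by
    have h1 : ((P * (ρ * σ))ᴴ).trace = star ((P * (ρ * σ)).trace) := trace_conjTranspose _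
    have h2 : (P * (ρ * σ))ᴴ = (σ * ρ) * P := by
      rw [conjTranspose_mul, conjTranspose_mul, hPpsd.isHermitian.eq, hρ.isHermitian.eq,
        hσ.isHermitian.eq]
    rw [h2] at h1
    rw [trace_mul_comm] at h1
    rw [hw, starRingEnd_apply, ← h1]
  -- cross term bound
  have hcross_re : (Complex.I * (c : ℂ) * ((P * (ρ * σ)).trace - (P * (σ * ρ)).trace)).re
      = -(2 * c * w.im) := by
    rw [hconj, ← hw, Complex.sub_conj]
    have h3 : Complex.I * (c : ℂ) * (((2 * w.im : ℝ) : ℂ) * Complex.I)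
        = ((-(c * (2 * w.im)) : ℝ) : ℂ) := by
      push_cast
      ring_nf
      rw [Complex.I_sq]
      ring
    rw [h3, Complex.ofReal_re]
    ring
  -- decompose w and bound im
  have hQQ' : ((1 : Matrix (Fin n) (Fin n) ℂ) - P) * (1 - P) = 1 - P := by
    rw [Matrix.sub_mul, Matrix.one_mul, Matrix.mul_sub, Matrix.mul_one, hPP]; abel
  have hX1H : X1ᴴ = P * ρ * (1 - P) := by
    rw [hX1, conjTranspose_mul, conjTranspose_mul, conjTranspose_sub, conjTranspose_one,
      hPpsd.isHermitian.eq, hρ.isHermitian.eq]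
  have hsplit : P * (ρ * σ) = (P * (ρ * P)) * σ + P * (ρ * ((1 - P) * σ)) := by
    noncomm_ring
  have hZ : (X1ᴴ * X2).trace = (P * (ρ * ((1 - P) * σ))).trace := by
    have e1 : X1ᴴ * X2 = (P * (ρ * ((1 - P) * σ))) * P := by
      rw [hX1H, hX2]
      simp only [Matrix.mul_assoc]
      rw [← Matrix.mul_assoc (1 - P) (1 - P), hQQ']
    rw [e1, trace_mul_comm, ← Matrix.mul_assoc, hPP]
  have hherm1 : (P * (ρ * P)).IsHermitian := by
    have h := hρ.conjTranspose_mul_mul_same P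
    rw [hPpsd.isHermitian.eq, Matrix.mul_assoc] at h
    exact h.isHermitian
  have him : |w.im| ≤ Real.sqrt a * Real.sqrt b := by
    have h1 : w = ((P * (ρ * P)) * σ).trace + (X1ᴴ * X2).trace := by
      rw [hw, hsplit, trace_add, hZ]
    have h2 : (((P * (ρ * P)) * σ).trace).im = 0 := herm_mul_trace_im hherm1 hσ.isHermitian
    have h4 : w.im = ((X1ᴴ * X2).trace).im := by
      rw [h1, Complex.add_im, h2, zero_add]
    rw [h4]
    exact (Complex.abs_im_le_norm _).trans (trace_cs X1 X2)
  -- AM-GM bound on the cross term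
  have hc0' : 0 ≤ c := Real.sqrt_nonneg _
  have key : -(2 * c * w.im) ≤ t * a + (1 - t) * b := by
    have h7 : -w.im ≤ Real.sqrt a * Real.sqrt b := (neg_le_abs _).trans him
    have e1 : c * (Real.sqrt a * Real.sqrt b)
        = Real.sqrt (t * a) * Real.sqrt ((1 - t) * b) := by
      rw [hcdef, Real.sqrt_mul ht0.le (1 - t), Real.sqrt_mul ht0.le a,
        Real.sqrt_mul (by linarith : (0:ℝ) ≤ 1 - t) b]
      ring
    have h8 : 2 * (c * (Real.sqrt a * Real.sqrt b)) ≤ t * a + (1 - t) * b := by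
      rw [e1]
      have h9 := two_mul_le_add_sq (Real.sqrt (t * a)) (Real.sqrt ((1 - t) * b))
      rw [Real.sq_sqrt (mul_nonneg ht0.le ha0),
        Real.sq_sqrt (mul_nonneg (by linarith : (0:ℝ) ≤ 1 - t) hb0)] at h9
      calc 2 * (Real.sqrt (t * a) * Real.sqrt ((1 - t) * b))
          = 2 * Real.sqrt (t * a) * Real.sqrt ((1 - t) * b) := by ring
        _ ≤ t * a + (1 - t) * b := h9
    have h10 : 2 * c * (-w.im) ≤ 2 * c * (Real.sqrt a * Real.sqrt b) :=
      mul_le_mul_of_nonneg_left h7 (by positivity)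
    calc -(2 * c * w.im) = 2 * c * (-w.im) := by ring
      _ ≤ 2 * c * (Real.sqrt a * Real.sqrt b) := h10
      _ = 2 * (c * (Real.sqrt a * Real.sqrt b)) := by ring
      _ ≤ t * a + (1 - t) * b := h8
  -- final assembly
  have hRHS : ∑ j ∈ univ.filter (fun j : Fin n => (j : ℕ) < k),
        (t * eigDesc hρ.isHermitian j + (1 - t) * eigDesc hσ.isHermitian j)
      = t * (∑ j ∈ univ.filter (fun j : Fin n => (j : ℕ) < k), eigDesc hρ.isHermitian j)
        + (1 - t) * (∑ j ∈ univ.filter (fun j : Fin n => (j : ℕ) < k),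
            eigDesc hσ.isHermitian j) := by
    rw [Finset.sum_add_distrib, Finset.mul_sum, Finset.mul_sum]
  rw [hLHS, hexpand, hcross_re, hRHS]
  have m1 : t * ((P * ρ).trace).re + t * a
      ≤ t * ∑ j ∈ univ.filter (fun j : Fin n => (j : ℕ) < k), eigDesc hρ.isHermitian j := by
    have := mul_le_mul_of_nonneg_left hA1 ht0.le
    rw [mul_add] at this
    exact this
  have m2 : (1 - t) * ((P * σ).trace).re + (1 - t) * b
      ≤ (1 - t) * ∑ j ∈ univ.filter (fun j : Fin n => (j : ℕ) < k),
          eigDesc hσ.isHermitian j := by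
    have := mul_le_mul_of_nonneg_left hA2 (by linarith : (0:ℝ) ≤ 1 - t)
    rw [mul_add] at this
    exact this
  linarith
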